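/- In every finite normal-form game Γ, for every weakly payoff monotone strategy profile μ and every ε > 0, there exists an interior payoff monotone strategy profile γ for Γ such that max over all players i and actions a_i of |μ_i(a_i) − γ_i(a_i)| is less than ε; consequently, a profile is the limit of weakly payoff monotone profiles if and only if it is the limit of interior payoff monotone profiles. -/

import Mathlib

open Filter Topology

section GameDefs

variable {N : Type} [Fintype N] [DecidableEq N] {A : N → Type}
  [∀ i, Fintype (A i)] [∀ i, DecidableEq (A i)]

/-- A mixed-strategy profile: each `σ i` is a probability distribution on `A i`. -/
def IsStrategy (σ : ∀ i, A i → ℝ) : Prop :=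
  (∀ i a, 0 ≤ σ i a) ∧ ∀ i, ∑ a, σ i a = 1

/-- An interior profile places positive probability on every action. -/
def Interior (σ : ∀ i, A i → ℝ) : Prop :=
  ∀ i a, 0 < σ i a

/-- Expected utility of player `i` at profile `σ`. -/
noncomputable def expUtil (u : ∀ i : N, (∀ j, A j) → ℝ) (σ : ∀ i, A i → ℝ) (i : N) : ℝ :=
  ∑ a : ∀ j, A j, u i a * ∏ j, σ j (a j)

/-- Expected utility of player `i` from playing action `ai` against `σ₋ᵢ`. -/
noncomputable def devUtil (u : ∀ i : N, (∀ j, A j) → ℝ) (σ : ∀ i, A i → ℝ)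
    (i : N) (ai : A i) : ℝ :=
  expUtil u (Function.update σ i (fun b => if b = ai then (1 : ℝ) else 0)) i

/-- Nash equilibrium. -/
def IsNash (u : ∀ i : N, (∀ j, A j) → ℝ) (σ : ∀ i, A i → ℝ) : Prop :=
  IsStrategy σ ∧ ∀ (i : N) (μ : A i → ℝ), (∀ a, 0 ≤ μ a) → (∑ a, μ a = 1) →
    expUtil u (Function.update σ i μ) i ≤ expUtil u σ i

/-- Weak payoff monotonicity: differences in behavior reveal differences in payoffs. -/
def WeaklyPayoffMonotone (u : ∀ i : N, (∀ j, A j) → ℝ) (σ : ∀ i, A i → ℝ) : Prop :=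
  IsStrategy σ ∧ ∀ (i : N) (ai bi : A i), σ i bi < σ i ai →
    devUtil u σ i bi < devUtil u σ i ai

/-- Payoff monotonicity. -/
def PayoffMonotone (u : ∀ i : N, (∀ j, A j) → ℝ) (σ : ∀ i, A i → ℝ) : Prop :=
  IsStrategy σ ∧ ∀ (i : N) (ai bi : A i),
    σ i bi ≤ σ i ai ↔ devUtil u σ i bi ≤ devUtil u σ i ai

/-- Pointwise convergence of a sequence of profiles. -/
def ConvergesTo (s : ℕ → ∀ i, A i → ℝ) (σ : ∀ i, A i → ℝ) : Prop :=
  ∀ (i : N) (ai : A i), Tendsto (fun n => s n i ai) atTop (𝓝 (σ i ai))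

/-- Empirical equilibrium: a Nash equilibrium that is the limit of weakly payoff
monotone profiles. -/
def IsEmpirical (u : ∀ i : N, (∀ j, A j) → ℝ) (σ : ∀ i, A i → ℝ) : Prop :=
  IsNash u σ ∧ ∃ s : ℕ → ∀ i, A i → ℝ,
    (∀ n, WeaklyPayoffMonotone u (s n)) ∧ ConvergesTo s σ

/-- Proper equilibrium (Myerson). -/
def IsProper (u : ∀ i : N, (∀ j, A j) → ℝ) (σ : ∀ i, A i → ℝ) : Prop :=
  IsStrategy σ ∧ ∃ s : ℕ → ∀ i, A i → ℝ,
    (∀ n, IsStrategy (s n) ∧ Interior (s n) ∧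
      ∀ (i : N) (ai bi : A i),
        devUtil u (s n) i bi < devUtil u (s n) i ai →
          s n i bi ≤ (1 / (n + 1) : ℝ) * s n i ai) ∧
    ConvergesTo s σ

/-- Perfect equilibrium (Selten, in Myerson's formulation). -/
def IsPerfect (u : ∀ i : N, (∀ j, A j) → ℝ) (σ : ∀ i, A i → ℝ) : Prop :=
  IsStrategy σ ∧ ∃ s : ℕ → ∀ i, A i → ℝ,
    (∀ n, IsStrategy (s n) ∧ Interior (s n) ∧
      ∀ (i : N) (ai : A i), (1 / (n + 1) : ℝ) < s n i ai →
        ∀ bi : A i, devUtil u (s n) i bi ≤ devUtil u (s n) i ai) ∧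
    ConvergesTo s σ

/-- `bi` weakly dominates `ai` for player `i`. -/
def WeaklyDominates (u : ∀ i : N, (∀ j, A j) → ℝ) (i : N) (bi ai : A i) : Prop :=
  (∀ a : ∀ j, A j, u i (Function.update a i ai) ≤ u i (Function.update a i bi)) ∧
  ∃ a : ∀ j, A j, u i (Function.update a i ai) < u i (Function.update a i bi)

/-- Undominated Nash equilibrium. -/
def IsUndominatedNash (u : ∀ i : N, (∀ j, A j) → ℝ) (σ : ∀ i, A i → ℝ) : Prop :=
  IsNash u σ ∧ ∀ (i : N) (ai : A i), 0 < σ i ai →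
    ¬ ∃ bi : A i, WeaklyDominates u i bi ai

end GameDefs

/-- A regular quantal response function on a finite set of actions `B`:
interiority, continuity, responsiveness, and monotonicity. -/
def IsRegularQRF {B : Type} [Fintype B] [DecidableEq B]
    (p : (B → ℝ) → (B → ℝ)) : Prop :=
  (∀ x, (∀ a, 0 < p x a) ∧ ∑ a, p x a = 1) ∧
  Continuous p ∧
  (∀ (x : B → ℝ) (η : ℝ) (a : B), 0 < η →
    p x a < p (Function.update x a (x a + η)) a) ∧
  ∀ (x : B → ℝ) (a b : B), x b < x a → p x b < p x a

section QREDefs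

variable {N : Type} [Fintype N] [DecidableEq N] {A : N → Type}
  [∀ i, Fintype (A i)] [∀ i, DecidableEq (A i)]

/-- Quantal response equilibrium with respect to a profile of QRFs `p`. -/
def IsQRE (u : ∀ i : N, (∀ j, A j) → ℝ) (p : ∀ i, (A i → ℝ) → (A i → ℝ))
    (σ : ∀ i, A i → ℝ) : Prop :=
  ∀ i : N, σ i = p i (fun ai => devUtil u σ i ai)

/-- A sequence of profiles of QRFs is utility maximizing in the limit. -/
def UtilityMaximizingInLimit (u : ∀ i : N, (∀ j, A j) → ℝ)
    (p : ℕ → ∀ i, (A i → ℝ) → (A i → ℝ)) : Prop :=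
  ∀ (s : ℕ → ∀ i, A i → ℝ) (σ : ∀ i, A i → ℝ),
    (∀ n, IsQRE u (p n) (s n)) → ConvergesTo s σ → IsNash u σ

/-- `σ` is approachable by regular QRE that are utility maximizing in the limit. -/
def ApproachableByRegularQRE (u : ∀ i : N, (∀ j, A j) → ℝ) (σ : ∀ i, A i → ℝ) : Prop :=
  ∃ p : ℕ → ∀ i, (A i → ℝ) → (A i → ℝ),
    (∀ n i, IsRegularQRF (p n i)) ∧ UtilityMaximizingInLimit u p ∧
    ∃ s : ℕ → ∀ i, A i → ℝ, (∀ n, IsQRE u (p n) (s n)) ∧ ConvergesTo s σ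

end QREDefs

/-- A control cost function (van Damme), bundled with its derivative on `(0,1]`. -/
structure ControlCost where
  f : ℝ → ℝ
  f' : ℝ → ℝ
  hasDeriv : ∀ x ∈ Set.Ioc (0:ℝ) 1, HasDerivWithinAt f (f' x) (Set.Ioc (0:ℝ) 1) x
  contDeriv : ContinuousOn f' (Set.Ioc (0:ℝ) 1)
  anti : StrictAntiOn f (Set.Ioc (0:ℝ) 1)
  convex : StrictConvexOn ℝ (Set.Ioc (0:ℝ) 1) f
  atOne : f 1 = 0
  blowup : Tendsto f (nhdsWithin 0 (Set.Ioi (0:ℝ))) atTop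

lemma abs_prod_sub_prod_le {ι : Type*} (s : Finset ι) (x y : ι → ℝ)
    (hx0 : ∀ i, 0 ≤ x i) (hx1 : ∀ i, x i ≤ 1) (hy0 : ∀ i, 0 ≤ y i) (hy1 : ∀ i, y i ≤ 1) :
    |∏ i ∈ s, x i - ∏ i ∈ s, y i| ≤ ∑ i ∈ s, |x i - y i| := by
  classical
  induction s using Finset.induction with
  | empty => simp
  | @insert a s ha ih =>
    rw [Finset.prod_insert ha, Finset.prod_insert ha, Finset.sum_insert ha]
    have hQ0 : 0 ≤ ∏ i ∈ s, y i := Finset.prod_nonneg fun i _ => hy0 i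
    have hQ1 : ∏ i ∈ s, y i ≤ 1 := Finset.prod_le_one (fun i _ => hy0 i) (fun i _ => hy1 i)
    have key : x a * ∏ i ∈ s, x i - y a * ∏ i ∈ s, y i
        = x a * (∏ i ∈ s, x i - ∏ i ∈ s, y i) + (x a - y a) * ∏ i ∈ s, y i := by ring
    rw [key]
    have h1 : |x a| ≤ 1 := abs_le.2 ⟨by linarith [hx0 a], hx1 a⟩
    have h2 : |∏ i ∈ s, y i| ≤ 1 := abs_le.2 ⟨by linarith, hQ1⟩
    calc |x a * (∏ i ∈ s, x i - ∏ i ∈ s, y i) + (x a - y a) * ∏ i ∈ s, y i|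
        ≤ |x a * (∏ i ∈ s, x i - ∏ i ∈ s, y i)| + |(x a - y a) * ∏ i ∈ s, y i| := abs_add_le _ _
      _ ≤ |x a - y a| + ∑ i ∈ s, |x i - y i| := by
          rw [abs_mul, abs_mul]
          have e1 := mul_le_of_le_one_left (abs_nonneg (∏ i ∈ s, x i - ∏ i ∈ s, y i)) h1
          have e2 := mul_le_of_le_one_right (abs_nonneg (x a - y a)) h2
          linarith

section MyHelpers
variable {N : Type} [Fintype N] [DecidableEq N] {A : N → Type}
  [∀ i, Fintype (A i)] [∀ i, DecidableEq (A i)]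

lemma comp_le_one {B : Type} [Fintype B] {f : B → ℝ} (h0 : ∀ b, 0 ≤ f b)
    (hs : ∑ b, f b = 1) (a : B) : f a ≤ 1 :=
  hs ▸ Finset.single_le_sum (fun b _ => h0 b) (Finset.mem_univ a)

lemma sum_prod_eq_one (τ : ∀ i, A i → ℝ) (hsum : ∀ i, ∑ b, τ i b = 1) :
    ∑ a : ∀ j, A j, ∏ j, τ j (a j) = 1 := by
  classical
  calc ∑ a : ∀ j, A j, ∏ j, τ j (a j)
      = ∏ j, ∑ b, τ j b := by
        rw [Finset.prod_univ_sum (fun i => (Finset.univ : Finset (A i)))]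
        rw [Fintype.piFinset_univ]
    _ = 1 := by simp [hsum]

lemma update_pure_props {σ : ∀ i, A i → ℝ} (hσ : IsStrategy σ) (i : N) (ai : A i) :
    (∀ j b, 0 ≤ Function.update σ i (fun b => if b = ai then (1:ℝ) else 0) j b) ∧
    (∀ j, ∑ b, Function.update σ i (fun b => if b = ai then (1:ℝ) else 0) j b = 1) := by
  constructor
  · intro j b
    rcases eq_or_ne j i with rfl | hj
    · rw [Function.update_self]; positivity
    · rw [Function.update_of_ne hj]; exact hσ.1 j b
  · intro j
    rcases eq_or_ne j i with rfl | hj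
    · rw [Function.update_self]; simp
    · rw [Function.update_of_ne hj]; exact hσ.2 j

lemma u_le_M (u : ∀ i : N, (∀ j, A j) → ℝ) (i : N) (a : ∀ j, A j) :
    |u i a| ≤ ∑ k, ∑ a', |u k a'| := by
  calc |u i a| ≤ ∑ a', |u i a'| :=
        Finset.single_le_sum (f := fun a' => |u i a'|) (fun b _ => abs_nonneg _) (Finset.mem_univ a)
    _ ≤ ∑ k, ∑ a', |u k a'| :=
        Finset.single_le_sum (f := fun k => ∑ a', |u k a'|) (fun k _ => Finset.sum_nonneg fun b _ => abs_nonneg _)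
          (Finset.mem_univ i)

lemma devUtil_abs_le (u : ∀ i : N, (∀ j, A j) → ℝ) {σ : ∀ i, A i → ℝ}
    (hσ : IsStrategy σ) (i : N) (ai : A i) :
    |devUtil u σ i ai| ≤ ∑ k, ∑ a', |u k a'| := by
  classical
  obtain ⟨h0, h1⟩ := update_pure_props hσ i ai
  set τ := Function.update σ i (fun b => if b = ai then (1:ℝ) else 0) with hτ
  set M := ∑ k, ∑ a', |u k a'| with hM
  calc |devUtil u σ i ai| = |∑ a : ∀ j, A j, u i a * ∏ j, τ j (a j)| := rfl
    _ ≤ ∑ a : ∀ j, A j, |u i a * ∏ j, τ j (a j)| := Finset.abs_sum_le_sum_abs _ _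
    _ ≤ ∑ a : ∀ j, A j, M * ∏ j, τ j (a j) := by
        refine Finset.sum_le_sum fun a _ => ?_
        rw [abs_mul, abs_of_nonneg (Finset.prod_nonneg fun j _ => h0 j (a j))]
        exact mul_le_mul_of_nonneg_right (u_le_M u i a)
          (Finset.prod_nonneg fun j _ => h0 j (a j))
    _ = M := by rw [← Finset.mul_sum, sum_prod_eq_one τ h1, mul_one]

lemma devUtil_lip (u : ∀ i : N, (∀ j, A j) → ℝ) {σ σ' : ∀ i, A i → ℝ}
    (hσ : IsStrategy σ) (hσ' : IsStrategy σ') (i : N) (ai : A i) :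
    |devUtil u σ i ai - devUtil u σ' i ai| ≤
      (∑ k, ∑ a', |u k a'|) * (Fintype.card (∀ j, A j)) * (Fintype.card N) * dist σ σ' := by
  classical
  obtain ⟨h0, h1⟩ := update_pure_props hσ i ai
  obtain ⟨h0', h1'⟩ := update_pure_props hσ' i ai
  set τ := Function.update σ i (fun b => if b = ai then (1:ℝ) else 0) with hτ
  set τ' := Function.update σ' i (fun b => if b = ai then (1:ℝ) else 0) with hτ'
  set M := ∑ k, ∑ a', |u k a'| with hM
  have hM0 : 0 ≤ M := Finset.sum_nonneg fun k _ => Finset.sum_nonneg fun b _ => abs_nonneg _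
  have key : ∀ a : ∀ j, A j, ∀ j, |τ j (a j) - τ' j (a j)| ≤ dist σ σ' := by
    intro a j
    rcases eq_or_ne j i with rfl | hj
    · rw [hτ, hτ', Function.update_self, Function.update_self, sub_self, abs_zero]
      exact dist_nonneg
    · rw [hτ, hτ', Function.update_of_ne hj, Function.update_of_ne hj, ← Real.dist_eq]
      exact (dist_le_pi_dist (σ j) (σ' j) (a j)).trans (dist_le_pi_dist σ σ' j)
  calc |devUtil u σ i ai - devUtil u σ' i ai|
      = |∑ a : ∀ j, A j, u i a * (∏ j, τ j (a j) - ∏ j, τ' j (a j))| := by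
        rw [devUtil, devUtil, expUtil, expUtil, ← Finset.sum_sub_distrib]
        congr 1; refine Finset.sum_congr rfl fun a _ => by ring
    _ ≤ ∑ a : ∀ j, A j, |u i a| * |∏ j, τ j (a j) - ∏ j, τ' j (a j)| := by
        refine (Finset.abs_sum_le_sum_abs _ _).trans ?_
        refine Finset.sum_le_sum fun a _ => ?_
        rw [abs_mul]
    _ ≤ ∑ a : ∀ j, A j, M * ((Fintype.card N) * dist σ σ') := by
        refine Finset.sum_le_sum fun a _ => ?_
        refine mul_le_mul (u_le_M u i a) ?_ (abs_nonneg _) hM0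
        calc |∏ j, τ j (a j) - ∏ j, τ' j (a j)|
            ≤ ∑ j, |τ j (a j) - τ' j (a j)| :=
              abs_prod_sub_prod_le _ _ _ (fun j => h0 j (a j))
                (fun j => comp_le_one (h0 j) (h1 j) (a j)) (fun j => h0' j (a j))
                (fun j => comp_le_one (h0' j) (h1' j) (a j))
          _ ≤ ∑ _j : N, dist σ σ' := Finset.sum_le_sum fun j _ => key a j
          _ = (Fintype.card N) * dist σ σ' := by
              rw [Finset.sum_const, Finset.card_univ, nsmul_eq_mul]
    _ = M * (Fintype.card (∀ j, A j)) * (Fintype.card N) * dist σ σ' := by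
        rw [Finset.sum_const, Finset.card_univ, nsmul_eq_mul]; ring
lemma isClosed_isStrategy : IsClosed {σ : ∀ i : N, A i → ℝ | IsStrategy σ} := by
  have h : {σ : ∀ i : N, A i → ℝ | IsStrategy σ} =
      (⋂ i, ⋂ a, {σ : ∀ i : N, A i → ℝ | 0 ≤ σ i a}) ∩
        ⋂ i, {σ : ∀ i : N, A i → ℝ | ∑ a, σ i a = 1} := by
    ext σ
    simp only [Set.mem_setOf_eq, Set.mem_inter_iff, Set.mem_iInter, IsStrategy]
  rw [h]
  apply IsClosed.inter
  · refine isClosed_iInter fun i => isClosed_iInter fun a => ?_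
    have hc : Continuous fun σ : ∀ i : N, A i → ℝ => σ i a :=
      (continuous_apply a).comp (continuous_apply i)
    exact isClosed_le continuous_const hc
  · refine isClosed_iInter fun i => ?_
    have hc : Continuous fun σ : ∀ i : N, A i → ℝ => ∑ a, σ i a :=
      continuous_finset_sum _ fun a _ => (continuous_apply a).comp (continuous_apply i)
    exact isClosed_eq hc continuous_const
end MyHelpers

set_option maxHeartbeats 1000000 in
theorem exists_interior_pm {N : Type} [Fintype N] [DecidableEq N] {A : N → Type}
    [∀ i, Fintype (A i)] [∀ i, DecidableEq (A i)] [∀ i, Nonempty (A i)]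
    (u : ∀ i : N, (∀ j, A j) → ℝ) (μ : ∀ i, A i → ℝ) (hμ : WeaklyPayoffMonotone u μ)
    (ε : ℝ) (hε : 0 < ε) :
    ∃ γ : ∀ i, A i → ℝ, Interior γ ∧ PayoffMonotone u γ ∧
      ∀ (i : N) (ai : A i), |μ i ai - γ i ai| < ε := by
  classical
  obtain ⟨hμS, hμW⟩ := hμ
  set M : ℝ := ∑ k, ∑ a', |u k a'| with hMdef
  have hM0 : 0 ≤ M := Finset.sum_nonneg fun k _ => Finset.sum_nonneg fun b _ => abs_nonneg _
  set B : ℕ := Fintype.card ((i : N) × A i) with hBdef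
  have hAB : ∀ i : N, (Fintype.card (A i) : ℝ) ≤ B := by
    intro i
    exact_mod_cast Fintype.card_le_of_injective (Sigma.mk i) sigma_mk_injective
  set L : ℝ := M * (Fintype.card (∀ j, A j)) * (Fintype.card N) with hLdef
  have hL0 : 0 ≤ L := by positivity
  set C : ℝ := (2*M+2) * (1+(B:ℝ)) with hCdef
  have hC0 : 0 < C := by positivity
  -- choose δ
  have base : Tendsto (fun δ : ℝ => δ) (𝓝[>] (0:ℝ)) (𝓝 0) :=
    tendsto_id.mono_left nhdsWithin_le_nhds
  have mulc : ∀ c : ℝ, Tendsto (fun δ : ℝ => δ * c) (𝓝[>] (0:ℝ)) (𝓝 0) := by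
    intro c
    have := base.mul_const c
    simpa using this
  have E1 : ∀ᶠ δ in 𝓝[>] (0:ℝ), 0 < δ :=
    eventually_mem_nhdsWithin.mono fun δ h => h
  have E2 : ∀ᶠ δ in 𝓝[>] (0:ℝ), δ * (2*M+1) ≤ 1 :=
    ((mulc (2*M+1)).eventually_lt_const one_pos).mono fun δ h => h.le
  have E3 : ∀ᶠ δ in 𝓝[>] (0:ℝ), δ * (L*(1+2*(B:ℝ))) ≤ 1/2 :=
    ((mulc (L*(1+2*(B:ℝ)))).eventually_lt_const (by norm_num : (0:ℝ) < 1/2)).mono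
      fun δ h => h.le
  have E4 : ∀ᶠ δ in 𝓝[>] (0:ℝ), C * δ < ε :=
    ((mulc C).eventually_lt_const hε).mono fun δ h => by rw [mul_comm]; exact h
  have E5 : ∀ᶠ δ in 𝓝[>] (0:ℝ), ∀ i : N, ∀ a b : A i, μ i b < μ i a →
      δ * (2*M+2) < μ i a - μ i b ∧
      2*(L*C)*δ < devUtil u μ i a - devUtil u μ i b := by
    rw [Filter.eventually_all]; intro i
    rw [Filter.eventually_all]; intro a
    rw [Filter.eventually_all]; intro b
    by_cases hab : μ i b < μ i a
    · have g1 : (0:ℝ) < μ i a - μ i b := sub_pos.2 hab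
      have g2 : (0:ℝ) < devUtil u μ i a - devUtil u μ i b := sub_pos.2 (hμW i a b hab)
      have e2 : Tendsto (fun δ : ℝ => 2*(L*C)*δ) (𝓝[>] (0:ℝ)) (𝓝 0) := by
        have := base.const_mul (2*(L*C)); simpa using this
      filter_upwards [(mulc (2*M+2)).eventually_lt_const g1, e2.eventually_lt_const g2]
        with δ h1 h2
      exact fun _ => ⟨h1, h2⟩
    · filter_upwards with δ
      exact fun h => absurd h hab
  have hev : ∀ᶠ δ in 𝓝[>] (0:ℝ), (0 < δ) ∧ δ * (2*M+1) ≤ 1 ∧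
      δ * (L*(1+2*(B:ℝ))) ≤ 1/2 ∧ C * δ < ε ∧
      ∀ i : N, ∀ a b : A i, μ i b < μ i a →
        δ * (2*M+2) < μ i a - μ i b ∧
        2*(L*C)*δ < devUtil u μ i a - devUtil u μ i b := by
    filter_upwards [E1, E2, E3, E4, E5] with δ h1 h2 h3 h4 h5
    exact ⟨h1, h2, h3, h4, h5⟩
  obtain ⟨δ, hδ0, hδ1, hδK, hδε, hpairs⟩ := hev.exists
  -- the space of strategies
  haveI hCS : CompleteSpace {σ : ∀ i, A i → ℝ // IsStrategy σ} :=
    (isClosed_isStrategy (N := N) (A := A)).completeSpace_coe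
  haveI hNE : Nonempty {σ : ∀ i, A i → ℝ // IsStrategy σ} := ⟨⟨μ, hμS⟩⟩
  set num : (∀ i, A i → ℝ) → ∀ i, A i → ℝ :=
    fun σ i a => μ i a + δ * (devUtil u σ i a + M + 1) with hnumdef
  set Z : (∀ i, A i → ℝ) → N → ℝ := fun σ i => ∑ b, num σ i b with hZdef
  have hnumapp : ∀ (σ : ∀ i, A i → ℝ) (i : N) (a : A i),
      num σ i a = μ i a + δ * (devUtil u σ i a + M + 1) := fun σ i a => by rw [hnumdef]
  have hZapp : ∀ (σ : ∀ i, A i → ℝ) (i : N), Z σ i = ∑ b, num σ i b :=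
    fun σ i => by rw [hZdef]
  have hZsplit : ∀ (σ : ∀ i, A i → ℝ) (i : N),
      Z σ i = 1 + δ * ∑ b, (devUtil u σ i b + M + 1) := by
    intro σ i
    rw [hZapp]
    simp only [hnumapp]
    rw [Finset.sum_add_distrib, hμS.2 i, Finset.mul_sum]
  -- basic bounds
  have f1 : ∀ σ : ∀ i, A i → ℝ, IsStrategy σ → ∀ i a, δ ≤ num σ i a := by
    intro σ hσ i a
    have hd := abs_le.1 (devUtil_abs_le u hσ i a)
    have hμ0 := hμS.1 i a
    have hge : (1:ℝ) ≤ devUtil u σ i a + M + 1 := by linarith [hd.1]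
    have h2 : δ * 1 ≤ δ * (devUtil u σ i a + M + 1) :=
      mul_le_mul_of_nonneg_left hge hδ0.le
    rw [hnumapp]
    linarith
  have f2 : ∀ σ : ∀ i, A i → ℝ, IsStrategy σ → ∀ i a, num σ i a ≤ 2 := by
    intro σ hσ i a
    have hd := abs_le.1 (devUtil_abs_le u hσ i a)
    have hle1 : μ i a ≤ 1 := comp_le_one (hμS.1 i) (hμS.2 i) a
    have : δ * (devUtil u σ i a + M + 1) ≤ δ * (2*M+1) :=
      mul_le_mul_of_nonneg_left (by linarith [hd.2]) hδ0.le
    rw [hnumapp]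
    linarith
  have f3 : ∀ σ : ∀ i, A i → ℝ, IsStrategy σ → ∀ i, 1 ≤ Z σ i := by
    intro σ hσ i
    rw [hZsplit σ i]
    have h0 : (0:ℝ) ≤ ∑ b, (devUtil u σ i b + M + 1) := by
      refine Finset.sum_nonneg fun b _ => ?_
      have hd := abs_le.1 (devUtil_abs_le u hσ i b)
      linarith [hd.1]
    nlinarith [hδ0.le]
  have f4 : ∀ σ : ∀ i, A i → ℝ, IsStrategy σ → ∀ i, (0:ℝ) < Z σ i :=
    fun σ hσ i => lt_of_lt_of_le zero_lt_one (f3 σ hσ i)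
  -- the map
  have Tmem : ∀ σ : ∀ i, A i → ℝ, IsStrategy σ → IsStrategy (fun i a => num σ i a / Z σ i) := by
    intro σ hσ
    constructor
    · intro i a
      exact div_nonneg (le_trans hδ0.le (f1 σ hσ i a)) (f4 σ hσ i).le
    · intro i
      rw [← Finset.sum_div]
      exact div_self (ne_of_gt (f4 σ hσ i))
  set T : {σ : ∀ i, A i → ℝ // IsStrategy σ} → {σ : ∀ i, A i → ℝ // IsStrategy σ} :=
    fun σ => ⟨fun i a => num σ.1 i a / Z σ.1 i, Tmem σ.1 σ.2⟩ with hTdef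
  -- contraction estimate
  have hcontr : ∀ σ σ' : {σ : ∀ i, A i → ℝ // IsStrategy σ},
      dist (T σ) (T σ') ≤ (1/2) * dist σ σ' := by
    intro σ σ'
    set D : ℝ := dist σ σ' with hDdef
    have hD0 : 0 ≤ D := dist_nonneg
    have hDeq : D = dist σ.1 σ'.1 := Subtype.dist_eq σ σ'
    rw [Subtype.dist_eq]
    rw [dist_pi_le_iff (by positivity)]
    intro i
    rw [dist_pi_le_iff (by positivity)]
    intro a
    rw [Real.dist_eq]
    have hd : ∀ b : A i, |devUtil u σ.1 i b - devUtil u σ'.1 i b| ≤ L * D := by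
      intro b
      rw [hLdef, hDeq]
      exact devUtil_lip u σ.2 σ'.2 i b
    have hnd : ∀ b : A i, |num σ.1 i b - num σ'.1 i b| ≤ δ * (L * D) := by
      intro b
      have : num σ.1 i b - num σ'.1 i b
          = δ * (devUtil u σ.1 i b - devUtil u σ'.1 i b) := by
        rw [hnumapp, hnumapp]; ring
      rw [this, abs_mul, abs_of_nonneg hδ0.le]
      exact mul_le_mul_of_nonneg_left (hd b) hδ0.le
    have hZd : |Z σ.1 i - Z σ'.1 i| ≤ (B:ℝ) * (δ * (L * D)) := by
      have : Z σ.1 i - Z σ'.1 i = ∑ b, (num σ.1 i b - num σ'.1 i b) := by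
        rw [hZapp, hZapp, Finset.sum_sub_distrib]
      rw [this]
      calc |∑ b, (num σ.1 i b - num σ'.1 i b)|
          ≤ ∑ b, |num σ.1 i b - num σ'.1 i b| := Finset.abs_sum_le_sum_abs _ _
        _ ≤ ∑ _b : A i, δ * (L * D) := Finset.sum_le_sum fun b _ => hnd b
        _ = (Fintype.card (A i) : ℝ) * (δ * (L * D)) := by
            rw [Finset.sum_const, Finset.card_univ, nsmul_eq_mul]
        _ ≤ (B:ℝ) * (δ * (L * D)) := by
            refine mul_le_mul_of_nonneg_right (hAB i) (by positivity)
    have hZ1 : (1:ℝ) ≤ Z σ.1 i := f3 σ.1 σ.2 i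
    have hZ1' : (1:ℝ) ≤ Z σ'.1 i := f3 σ'.1 σ'.2 i
    have hfrac : num σ.1 i a / Z σ.1 i - num σ'.1 i a / Z σ'.1 i
        = (num σ.1 i a - num σ'.1 i a) / Z σ.1 i
          + num σ'.1 i a * (Z σ'.1 i - Z σ.1 i) / (Z σ.1 i * Z σ'.1 i) := by
      field_simp
      ring
    have hTab : (T σ).1 i a - (T σ').1 i a
        = (num σ.1 i a - num σ'.1 i a) / Z σ.1 i
          + num σ'.1 i a * (Z σ'.1 i - Z σ.1 i) / (Z σ.1 i * Z σ'.1 i) := hfrac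
    rw [hTab]
    have b1 : |(num σ.1 i a - num σ'.1 i a) / Z σ.1 i| ≤ δ * (L * D) := by
      rw [abs_div, abs_of_nonneg (by linarith : (0:ℝ) ≤ Z σ.1 i)]
      exact (div_le_self (abs_nonneg _) hZ1).trans (hnd a)
    have b2 : |num σ'.1 i a * (Z σ'.1 i - Z σ.1 i) / (Z σ.1 i * Z σ'.1 i)|
        ≤ 2 * ((B:ℝ) * (δ * (L * D))) := by
      rw [abs_div, abs_mul]
      have hZZ : (1:ℝ) ≤ |Z σ.1 i * Z σ'.1 i| := by
        rw [abs_of_nonneg (by nlinarith : (0:ℝ) ≤ Z σ.1 i * Z σ'.1 i)]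
        nlinarith
      have hnum2 : |num σ'.1 i a| ≤ 2 := by
        rw [abs_of_nonneg (le_trans hδ0.le (f1 σ'.1 σ'.2 i a))]
        exact f2 σ'.1 σ'.2 i a
      have habs : |Z σ'.1 i - Z σ.1 i| ≤ (B:ℝ) * (δ * (L * D)) := by
        rw [abs_sub_comm]; exact hZd
      calc |num σ'.1 i a| * |Z σ'.1 i - Z σ.1 i| / |Z σ.1 i * Z σ'.1 i|
          ≤ |num σ'.1 i a| * |Z σ'.1 i - Z σ.1 i| / 1 := by
            refine div_le_div_of_nonneg_left ?_ ?_ hZZ  <;> positivity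
        _ = |num σ'.1 i a| * |Z σ'.1 i - Z σ.1 i| := by rw [div_one]
        _ ≤ 2 * ((B:ℝ) * (δ * (L * D))) :=
            mul_le_mul hnum2 habs (abs_nonneg _) (by norm_num)
    calc |(num σ.1 i a - num σ'.1 i a) / Z σ.1 i
          + num σ'.1 i a * (Z σ'.1 i - Z σ.1 i) / (Z σ.1 i * Z σ'.1 i)|
        ≤ |(num σ.1 i a - num σ'.1 i a) / Z σ.1 i|
          + |num σ'.1 i a * (Z σ'.1 i - Z σ.1 i) / (Z σ.1 i * Z σ'.1 i)| := abs_add_le _ _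
      _ ≤ δ * (L * D) + 2 * ((B:ℝ) * (δ * (L * D))) := add_le_add b1 b2
      _ = (δ * (L * (1 + 2*(B:ℝ)))) * D := by ring
      _ ≤ (1/2) * D := by
          refine mul_le_mul_of_nonneg_right hδK hD0
  have hT : ContractingWith (1/2 : NNReal) T := by
    constructor
    · rw [← NNReal.coe_lt_coe]; norm_num
    · refine LipschitzWith.of_dist_le_mul fun x y => ?_
      have := hcontr x y
      have hc : ((1/2 : NNReal) : ℝ) = 1/2 := by norm_num
      rw [hc]
      exact this
  set γp := ContractingWith.fixedPoint T hT with hγpdef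
  have hfix : T γp = γp := hT.fixedPoint_isFixedPt
  set γ : ∀ i, A i → ℝ := γp.1 with hγdef
  have hγS : IsStrategy γ := γp.2
  have heq : ∀ i a, num γ i a / Z γ i = γ i a := by
    intro i a
    have h1 : (T γp).1 i a = γp.1 i a := by rw [hfix]
    rw [hTdef] at h1
    exact h1
  -- Z as 1 + δ H
  have hclose : ∀ i a, |μ i a - γ i a| ≤ C * δ := by
    intro i a
    have hZpos := f4 γ hγS i
    set H : ℝ := ∑ b, (devUtil u γ i b + M + 1) with hHdef
    have hH0 : 0 ≤ H := by
      refine Finset.sum_nonneg fun b _ => ?_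
      have hd := abs_le.1 (devUtil_abs_le u hγS i b)
      linarith [hd.1]
    have hH1 : H ≤ (B:ℝ) * (2*M+1) := by
      calc H ≤ ∑ _b : A i, (2*M+1) := by
            refine Finset.sum_le_sum fun b _ => ?_
            have hd := abs_le.1 (devUtil_abs_le u hγS i b)
            linarith [hd.2]
        _ = (Fintype.card (A i) : ℝ) * (2*M+1) := by
            rw [Finset.sum_const, Finset.card_univ, nsmul_eq_mul]
        _ ≤ (B:ℝ) * (2*M+1) := mul_le_mul_of_nonneg_right (hAB i) (by linarith)
    have hZH : (0:ℝ) < 1 + δ * H := by rw [hHdef, ← hZsplit γ i]; exact hZpos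
    have hne : (1:ℝ) + δ * H ≠ 0 := ne_of_gt hZH
    have key : γ i a - μ i a
        = δ * ((devUtil u γ i a + M + 1) - μ i a * H) / (1 + δ * H) := by
      rw [← heq i a, hnumapp, hZsplit γ i, ← hHdef]
      field_simp
      ring
    have habs : |(devUtil u γ i a + M + 1) - μ i a * H| ≤ C := by
      have hd := abs_le.1 (devUtil_abs_le u hγS i a)
      have hμ0 : 0 ≤ μ i a := hμS.1 i a
      have hμ1 : μ i a ≤ 1 := comp_le_one (hμS.1 i) (hμS.2 i) a
      have hB0 : (0:ℝ) ≤ (B:ℝ) := Nat.cast_nonneg B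
      rw [abs_le]
      constructor
      · have : μ i a * H ≤ 1 * ((B:ℝ)*(2*M+1)) :=
          mul_le_mul hμ1 hH1 hH0 one_pos.le
        rw [hCdef]
        nlinarith [hd.1]
      · have : 0 ≤ μ i a * H := mul_nonneg hμ0 hH0
        rw [hCdef]
        nlinarith [hd.2]
    rw [abs_sub_comm]
    have : |γ i a - μ i a| ≤ δ * C := by
      rw [key, abs_div, abs_mul, abs_of_nonneg hδ0.le,
        abs_of_nonneg hZH.le]
      have h1 : δ * |(devUtil u γ i a + M + 1) - μ i a * H| ≤ δ * C :=
        mul_le_mul_of_nonneg_left habs hδ0.le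
      calc δ * |(devUtil u γ i a + M + 1) - μ i a * H| / (1 + δ * H)
          ≤ δ * |(devUtil u γ i a + M + 1) - μ i a * H| := by
            refine div_le_self (by positivity) ?_
            nlinarith [mul_nonneg hδ0.le hH0]
        _ ≤ δ * C := h1
    linarith [this]
  have hdistγμ : dist γ μ ≤ C * δ := by
    rw [dist_pi_le_iff (by positivity)]
    intro i
    rw [dist_pi_le_iff (by positivity)]
    intro a
    rw [Real.dist_eq, abs_sub_comm]
    exact hclose i a
  have hdev : ∀ (i : N) (a : A i), |devUtil u γ i a - devUtil u μ i a| ≤ L * (C * δ) := by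
    intro i a
    calc |devUtil u γ i a - devUtil u μ i a|
        ≤ L * dist γ μ := by rw [hLdef]; exact devUtil_lip u hγS hμS i a
      _ ≤ L * (C * δ) := mul_le_mul_of_nonneg_left hdistγμ hL0
  -- conclusion
  refine ⟨γ, ?_, ⟨hγS, ?_⟩, fun i a => lt_of_le_of_lt (hclose i a) hδε⟩
  · intro i a
    rw [← heq i a]
    exact div_pos (lt_of_lt_of_le hδ0 (f1 γ hγS i a)) (f4 γ hγS i)
  · intro i a b
    have hZpos := f4 γ hγS i
    have hdivle : γ i b ≤ γ i a ↔ num γ i b ≤ num γ i a := by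
      rw [← heq i a, ← heq i b]
      exact div_le_div_iff_of_pos_right hZpos
    have expand : ∀ (c dd : ℝ), c + δ * (dd + M + 1) = c + δ*dd + δ*(M+1) :=
      fun c dd => by ring
    have hnumiff : (num γ i b ≤ num γ i a) ↔
        μ i b + δ * devUtil u γ i b ≤ μ i a + δ * devUtil u γ i a := by
      rw [hnumapp, hnumapp, expand, expand]
      constructor <;> intro h <;> linarith
    rw [hdivle, hnumiff]
    have hMb := abs_le.1 (devUtil_abs_le u hγS i b)
    have hMa := abs_le.1 (devUtil_abs_le u hγS i a)
    rcases lt_trichotomy (μ i b) (μ i a) with hlt | heqm | hgt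
    · obtain ⟨p1, p2⟩ := hpairs i a b hlt
      have hdb := abs_le.1 (hdev i b)
      have hda := abs_le.1 (hdev i a)
      have hdev_lt : devUtil u γ i b < devUtil u γ i a := by linarith [hda.1, hdb.2]
      have h1 : δ * devUtil u γ i b ≤ δ * M := mul_le_mul_of_nonneg_left hMb.2 hδ0.le
      have h2 : δ * (-M) ≤ δ * devUtil u γ i a := mul_le_mul_of_nonneg_left hMa.1 hδ0.le
      have hnum_le : μ i b + δ * devUtil u γ i b ≤ μ i a + δ * devUtil u γ i a := by
        linarith [hδ0.le]
      exact iff_of_true hnum_le hdev_lt.le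
    · constructor
      · intro h
        have hd : δ * devUtil u γ i b ≤ δ * devUtil u γ i a := by linarith
        exact le_of_mul_le_mul_left hd hδ0
      · intro h
        have := mul_le_mul_of_nonneg_left h hδ0.le
        linarith
    · obtain ⟨p1, p2⟩ := hpairs i b a hgt
      have hdb := abs_le.1 (hdev i b)
      have hda := abs_le.1 (hdev i a)
      have hdev_lt : devUtil u γ i a < devUtil u γ i b := by linarith [hdb.1, hda.2]
      have h1 : δ * devUtil u γ i a ≤ δ * M := mul_le_mul_of_nonneg_left hMa.2 hδ0.le
      have h2 : δ * (-M) ≤ δ * devUtil u γ i b := mul_le_mul_of_nonneg_left hMb.1 hδ0.le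
      have hnum_lt : μ i a + δ * devUtil u γ i a < μ i b + δ * devUtil u γ i b := by
        linarith [hδ0.le]
      exact iff_of_false (not_le.2 hnum_lt) (not_le.2 hdev_lt)

/-- weakly payoff monotone profiles can be approximated by interior
payoff monotone ones; consequently the respective sets of limits coincide. -/
theorem wpm_approximated_by_interior_pm {N : Type} [Fintype N] [DecidableEq N] {A : N → Type}
    [∀ i, Fintype (A i)] [∀ i, DecidableEq (A i)] [∀ i, Nonempty (A i)]
    (u : ∀ i : N, (∀ j, A j) → ℝ) :
    (∀ μ : ∀ i, A i → ℝ, WeaklyPayoffMonotone u μ → ∀ ε : ℝ, 0 < ε →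
      ∃ γ : ∀ i, A i → ℝ, Interior γ ∧ PayoffMonotone u γ ∧
        ∀ (i : N) (ai : A i), |μ i ai - γ i ai| < ε) ∧
    ∀ σ : ∀ i, A i → ℝ,
      ((∃ s : ℕ → ∀ i, A i → ℝ,
          (∀ n, WeaklyPayoffMonotone u (s n)) ∧ ConvergesTo s σ) ↔
        (∃ s : ℕ → ∀ i, A i → ℝ,
          (∀ n, Interior (s n) ∧ PayoffMonotone u (s n)) ∧ ConvergesTo s σ)) := by
  have main : ∀ μ : ∀ i, A i → ℝ, WeaklyPayoffMonotone u μ → ∀ ε : ℝ, 0 < ε →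
      ∃ γ : ∀ i, A i → ℝ, Interior γ ∧ PayoffMonotone u γ ∧
        ∀ (i : N) (ai : A i), |μ i ai - γ i ai| < ε :=
    fun μ hμ ε hε => exists_interior_pm u μ hμ ε hε
  refine ⟨main, fun σ => ⟨?_, ?_⟩⟩
  · rintro ⟨s, hs, hconv⟩
    choose γ hγI hγPM hγclose using fun n : ℕ =>
      main (s n) (hs n) (1/(n+1) : ℝ) (by positivity)
    refine ⟨γ, fun n => ⟨hγI n, hγPM n⟩, ?_⟩
    intro i ai
    have h1 := hconv i ai
    have h2 : Tendsto (fun n => s n i ai - γ n i ai) atTop (𝓝 0) := by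
      refine squeeze_zero_norm (fun n => (hγclose n i ai).le) ?_
      exact_mod_cast tendsto_one_div_add_atTop_nhds_zero_nat (𝕜 := ℝ)
    have h3 := h1.sub h2
    simpa using h3
  · rintro ⟨s, hs, hconv⟩
    refine ⟨s, fun n => ?_, hconv⟩
    refine ⟨(hs n).2.1, fun i ai bi h => ?_⟩
    by_contra hc
    have h' : devUtil u (s n) i ai ≤ devUtil u (s n) i bi := not_lt.1 hc
    have := ((hs n).2.2 i bi ai).2 h'
    exact absurd this (not_le.2 h)
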